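/- arXiv:1706.03276 — 3 statements merged into one kernel-verified Lean document; each statement's English description precedes it below -/
import Mathlib

section
/- Let G = (X, +, ≤) be an ordered group, let K(G) := {x ∈ X : x ≤_pred 0 and 0 ≤_pred x} (a normal subgroup of G), and let I(G)(0) be the connected component of 0 in the incomparability graph of (X, ≤). The following are equivalent: (i) the order ≤ is a semiorder; (ii) the quotient group I(G)(0)/K(G), equipped with the image of ≤ under the quotient map, is a threshold group; (iii) the quotient group G/K(G), equipped with the image of ≤ under the quotient map, is a threshold group. (The image order on a quotient by a normal convex subgroup H is: α ≤_H β iff a ≤ b for some a ∈ α, b ∈ β.) -/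
namespace ThrPaper

universe u

variable {X : Type*}

/-- The strict order associated to a reflexive relation `le`. -/
def Lt (le : X → X → Prop) (x y : X) : Prop := le x y ∧ ¬ le y x

/-- `x` and `y` are incomparable with respect to `le`. -/
def Incomp (le : X → X → Prop) (x y : X) : Prop := ¬ le x y ∧ ¬ le y x

/-- `le` is a partial order (reflexive, transitive, antisymmetric). -/
def IsPartialOrderRel (le : X → X → Prop) : Prop :=
  (∀ x, le x x) ∧ (∀ x y z, le x y → le y z → le x z) ∧ ∀ x y, le x y → le y x → x = y

/-- `le` is total. -/
def IsTotalRel (le : X → X → Prop) : Prop := ∀ x y, le x y ∨ le y x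

/-- Compatibility of a relation with the (not necessarily abelian) group operation. -/
def IsCompat {G : Type*} [AddGroup G] (le : G → G → Prop) : Prop :=
  ∀ a b x y : G, le x y → le (a + x + b) (a + y + b)

/-- The trace quasi-order `≤_pred`: `x ≤_pred y` iff every `z < x` satisfies `z < y`. -/
def PredLe (le : X → X → Prop) (x y : X) : Prop := ∀ z, Lt le z x → Lt le z y

/-- The trace quasi-order `≤_succ`: `x ≤_succ y` iff every `z > y` satisfies `z > x`. -/
def SuccLe (le : X → X → Prop) (x y : X) : Prop := ∀ z, Lt le y z → Lt le x z

/-- `le` is a threshold order: `≤_pred` and `≤_succ` are equal and are total orders. -/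
def IsThresholdOrder (le : X → X → Prop) : Prop :=
  (∀ x y, PredLe le x y ↔ SuccLe le x y) ∧
  (∀ x y, PredLe le x y ∨ PredLe le y x) ∧
  ∀ x y, PredLe le x y → PredLe le y x → x = y

/-- The poset `2 ⊕ 2` embeds into `le`. -/
def Embeds2p2 (le : X → X → Prop) : Prop :=
  ∃ a b c d : X, Lt le a b ∧ Lt le c d ∧
    Incomp le a c ∧ Incomp le a d ∧ Incomp le b c ∧ Incomp le b d

/-- The poset `3 ⊕ 1` embeds into `le`. -/
def Embeds3p1 (le : X → X → Prop) : Prop :=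
  ∃ a b c d : X, Lt le a b ∧ Lt le b c ∧ Incomp le d a ∧ Incomp le d b ∧ Incomp le d c

/-- The poset `1 ⊕ 2` embeds into `le`. -/
def Embeds1p2 (le : X → X → Prop) : Prop :=
  ∃ a b c : X, Lt le a b ∧ Incomp le c a ∧ Incomp le c b

/-- The image of a relation `r` on a group `H` under the quotient map `H → H ⧸ K`:
`α ≤ β` iff `a ≤ b` for some representatives `a ∈ α`, `b ∈ β`. -/
def imageRel {H : Type*} [AddGroup H] (K : AddSubgroup H) (r : H → H → Prop) :
    H ⧸ K → H ⧸ K → Prop := fun α β =>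
  ∃ a b : H, (QuotientAddGroup.mk a : H ⧸ K) = α ∧ (QuotientAddGroup.mk b : H ⧸ K) = β ∧ r a b

/-- An ordered group whose order is a threshold order. -/
def IsThresholdGroup (G : Type*) [AddGroup G] (le : G → G → Prop) : Prop :=
  IsPartialOrderRel le ∧ IsCompat le ∧ IsThresholdOrder le

/-! ### Auxiliary lemmas -/

section PosetLemmas

variable {le : X → X → Prop}

lemma lt_irrefl' (x : X) : ¬ Lt le x x := fun h => h.2 h.1

lemma lt_of_lt_of_le' (hpo : IsPartialOrderRel le) {x y z : X}
    (h1 : Lt le x y) (h2 : le y z) : Lt le x z :=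
  ⟨hpo.2.1 _ _ _ h1.1 h2, fun h => h1.2 (hpo.2.1 _ _ _ h2 h)⟩

lemma lt_of_le_of_lt' (hpo : IsPartialOrderRel le) {x y z : X}
    (h1 : le x y) (h2 : Lt le y z) : Lt le x z :=
  ⟨hpo.2.1 _ _ _ h1 h2.1, fun h => h2.2 (hpo.2.1 _ _ _ h h1)⟩

lemma lt_trans' (hpo : IsPartialOrderRel le) {x y z : X}
    (h1 : Lt le x y) (h2 : Lt le y z) : Lt le x z :=
  lt_of_lt_of_le' hpo h1 h2.1

/-- If there is no `2 ⊕ 2`, then `≤_pred` is total. -/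
lemma predLe_total_of_no2p2 (hpo : IsPartialOrderRel le) (h : ¬ Embeds2p2 le) :
    ∀ x y, PredLe le x y ∨ PredLe le y x := by
  intro x y
  by_contra hcon
  push_neg at hcon
  obtain ⟨h1, h2⟩ := hcon
  unfold PredLe at h1 h2
  push_neg at h1 h2
  obtain ⟨a, hax, hay⟩ := h1
  obtain ⟨c, hcy, hcx⟩ := h2
  -- a ∥ y
  have hay' : Incomp le a y := by
    constructor
    · intro hle
      rcases Classical.em (le y a) with hya | hya
      · have heq : a = y := hpo.2.2 _ _ hle hya
        exact hcx (lt_trans' hpo (heq.symm ▸ hcy) hax)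
      · exact hay ⟨hle, hya⟩
    · intro hya
      exact hcx (lt_trans' hpo (lt_of_lt_of_le' hpo hcy hya) hax)
  -- c ∥ x
  have hcx' : Incomp le c x := by
    constructor
    · intro hle
      rcases Classical.em (le x c) with hxc | hxc
      · have heq : c = x := hpo.2.2 _ _ hle hxc
        exact hay (lt_trans' hpo hax (heq ▸ hcy))
      · exact hcx ⟨hle, hxc⟩
    · intro hxc
      exact hay (lt_trans' hpo (lt_of_lt_of_le' hpo hax hxc) hcy)
  -- x ∥ y
  have hxy : Incomp le x y := by
    constructor
    · intro hle; exact hay (lt_of_lt_of_le' hpo hax hle)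
    · intro hle; exact hcx (lt_of_lt_of_le' hpo hcy hle)
  -- a ∥ c
  have hac : Incomp le a c := by
    constructor
    · intro hle; exact hay (lt_of_le_of_lt' hpo hle hcy)
    · intro hle; exact hcx (lt_of_le_of_lt' hpo hle hax)
  exact h ⟨a, x, c, y, hax, hcy, hac, hay', ⟨fun hh => hcx'.2 hh, fun hh => hcx'.1 hh⟩, hxy⟩

/-- If `≤_pred` is total then there is no `2 ⊕ 2`. -/
lemma no2p2_of_predLe_total (ht : ∀ x y, PredLe le x y ∨ PredLe le y x) :
    ¬ Embeds2p2 le := by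
  rintro ⟨a, b, c, d, hab, hcd, _hac, had, hbc, _hbd⟩
  rcases ht b d with h | h
  · exact had.1 (h a hab).1
  · exact hbc.2 (h c hcd).1

/-- If `≤_pred` is total and equals `≤_succ` then there is no `3 ⊕ 1`. -/
lemma no3p1_of_predLe_total (ht : ∀ x y, PredLe le x y ∨ PredLe le y x)
    (hps : ∀ x y, PredLe le x y ↔ SuccLe le x y) :
    ¬ Embeds3p1 le := by
  rintro ⟨a, b, c, d, hab, hbc, hda, _hdb, hdc⟩
  rcases ht d b with h | h
  · exact hdc.1 ((hps d b).mp h c hbc).1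
  · exact hda.2 (h a hab).1

end PosetLemmas

set_option linter.unusedSectionVars false

section GroupLemmas

variable {G : Type*} [AddGroup G] {le : G → G → Prop}

lemma compat_iff (hc : IsCompat le) (a b x y : G) :
    le (a + x + b) (a + y + b) ↔ le x y := by
  constructor
  · intro h
    have := hc (-a) (-b) _ _ h
    simpa [add_assoc] using this
  · exact hc a b x y

lemma compat_lt_iff (hc : IsCompat le) (a b x y : G) :
    Lt le (a + x + b) (a + y + b) ↔ Lt le x y := by
  unfold Lt; rw [compat_iff hc, compat_iff hc]

lemma compat_incomp_iff (hc : IsCompat le) (a b x y : G) :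
    Incomp le (a + x + b) (a + y + b) ↔ Incomp le x y := by
  unfold Incomp; rw [compat_iff hc, compat_iff hc]

lemma predLe_iff_pos (hc : IsCompat le) (x y : G) :
    PredLe le x y ↔ ∀ w, Lt le 0 w → Lt le x (w + y) := by
  constructor
  · intro h w hw
    have h1 : Lt le (-w + x) x := by
      have := (compat_lt_iff hc (-w) x 0 w).mpr hw
      simpa [add_assoc] using this
    have h2 := h _ h1
    have := (compat_lt_iff hc w 0 (-w + x) y).mpr h2
    simpa [add_assoc] using this
  · intro h z hz
    have hw : Lt le 0 (x + -z) := by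
      have := (compat_lt_iff hc 0 (-z) z x).mpr hz
      simpa using this
    have h2 := h _ hw
    have := (compat_lt_iff hc (z + -x) 0 x (x + -z + y)).mpr h2
    simpa [add_assoc] using this

lemma succLe_iff_pos (hc : IsCompat le) (x y : G) :
    SuccLe le x y ↔ ∀ w, Lt le 0 w → Lt le x (y + w) := by
  constructor
  · intro h w hw
    apply h
    have := (compat_lt_iff hc y 0 0 w).mpr hw
    simpa [add_assoc] using this
  · intro h z hz
    have hw : Lt le 0 (-y + z) := by
      have := (compat_lt_iff hc (-y) 0 y z).mpr hz
      simpa [add_assoc] using this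
    have h2 := h _ hw
    simpa [add_assoc] using h2

lemma pos_conj (hc : IsCompat le) {w : G} (a : G) (hw : Lt le 0 w) :
    Lt le 0 (a + w + -a) := by
  have := (compat_lt_iff hc a (-a) 0 w).mpr hw
  simpa using this

lemma pos_conj' (hc : IsCompat le) {w : G} (a : G) (hw : Lt le 0 w) :
    Lt le 0 (-a + w + a) := by
  have := (compat_lt_iff hc (-a) a 0 w).mpr hw
  simpa using this

/-- In an ordered group, `≤_pred` and `≤_succ` coincide. -/
lemma predLe_iff_succLe (hc : IsCompat le) (x y : G) :
    PredLe le x y ↔ SuccLe le x y := by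
  rw [predLe_iff_pos hc, succLe_iff_pos hc]
  constructor
  · intro h w hw
    have := h (y + w + -y) (pos_conj hc y hw)
    simpa [add_assoc] using this
  · intro h w hw
    have := h (-y + w + y) (pos_conj' hc y hw)
    simpa [add_assoc] using this

lemma predLe_conj (hc : IsCompat le) (a b x y : G) :
    PredLe le (a + x + b) (a + y + b) ↔ PredLe le x y := by
  constructor
  · intro h z hz
    have h1 := h (a + z + b) ((compat_lt_iff hc a b z x).mpr hz)
    exact (compat_lt_iff hc a b z y).mp h1
  · intro h z hz
    have hz' : Lt le (a + (-a + z + -b) + b) (a + x + b) := by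
      simpa [add_assoc] using hz
    have := (compat_lt_iff hc a b _ x).mp hz'
    have h2 := h _ this
    have := (compat_lt_iff hc a b _ y).mpr h2
    simpa [add_assoc] using this

/-- The pred-equivalence relation. -/
def PEq (le : G → G → Prop) (x y : G) : Prop := PredLe le x y ∧ PredLe le y x

lemma PEq.symm' {x y : G} (h : PEq le x y) : PEq le y x := ⟨h.2, h.1⟩

lemma PEq.refl' (x : G) : PEq le x x := ⟨fun _ h => h, fun _ h => h⟩

lemma PEq.trans' {x y z : G} (h1 : PEq le x y) (h2 : PEq le y z) : PEq le x z :=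
  ⟨fun w hw => h2.1 w (h1.1 w hw), fun w hw => h1.2 w (h2.2 w hw)⟩

lemma lt_of_peq_left (hc : IsCompat le) {u v x : G} (h : PEq le u x) (huv : Lt le u v) :
    Lt le x v :=
  (predLe_iff_succLe hc x u).mp h.2 v huv

lemma lt_of_peq_right {u v y : G} (h : PEq le v y) (huv : Lt le u v) :
    Lt le u y :=
  h.1 u huv

lemma not_lt_of_peq {x y : G} (h : PEq le x y) (hxy : Lt le x y) : False :=
  lt_irrefl' x (h.2 x hxy)

end GroupLemmas
section QuotLemmas

variable {G : Type*} [AddGroup G] {le : G → G → Prop} {K : AddSubgroup G}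

lemma mem_K_iff (hK : (K : Set G) = {x : G | PredLe le x 0 ∧ PredLe le 0 x}) (z : G) :
    z ∈ K ↔ PredLe le z 0 ∧ PredLe le 0 z := by
  rw [← SetLike.mem_coe, hK]; rfl

lemma peq_iff_mem (hc : IsCompat le)
    (hK : (K : Set G) = {x : G | PredLe le x 0 ∧ PredLe le 0 x}) {x y : G} :
    PEq le x y ↔ -x + y ∈ K := by
  have e1 : PredLe le 0 (-x + y) ↔ PredLe le x y := by
    simpa using predLe_conj hc (-x) 0 x y
  have e2 : PredLe le (-x + y) 0 ↔ PredLe le y x := by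
    simpa using predLe_conj hc (-x) 0 y x
  rw [mem_K_iff hK, e1, e2]
  exact ⟨fun h => ⟨h.2, h.1⟩, fun h => ⟨h.2, h.1⟩⟩

lemma mk_eq_iff_peq (hc : IsCompat le)
    (hK : (K : Set G) = {x : G | PredLe le x 0 ∧ PredLe le 0 x}) {x y : G} :
    (QuotientAddGroup.mk x : G ⧸ K) = QuotientAddGroup.mk y ↔ PEq le x y := by
  rw [QuotientAddGroup.eq, ← peq_iff_mem hc hK]

lemma imageRel_mk_iff (hpo : IsPartialOrderRel le) (hc : IsCompat le)
    (hK : (K : Set G) = {x : G | PredLe le x 0 ∧ PredLe le 0 x}) {x y : G} :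
    imageRel K le (QuotientAddGroup.mk x) (QuotientAddGroup.mk y) ↔
      (Lt le x y ∨ PEq le x y) := by
  constructor
  · rintro ⟨u, v, hu, hv, huv⟩
    have hux : PEq le u x := (mk_eq_iff_peq hc hK).mp hu
    have hvy : PEq le v y := (mk_eq_iff_peq hc hK).mp hv
    by_cases h : le v u
    · have heq : u = v := hpo.2.2 _ _ huv h
      subst heq
      exact Or.inr (hux.symm'.trans' hvy)
    · exact Or.inl (lt_of_peq_right hvy (lt_of_peq_left hc hux ⟨huv, h⟩))
  · rintro (h | h)
    · exact ⟨x, y, rfl, rfl, h.1⟩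
    · exact ⟨x, x, rfl, (mk_eq_iff_peq hc hK).mpr h, hpo.1 x⟩

lemma lt_imageRel_mk_iff (hpo : IsPartialOrderRel le) (hc : IsCompat le)
    (hK : (K : Set G) = {x : G | PredLe le x 0 ∧ PredLe le 0 x}) {x y : G} :
    Lt (imageRel K le) (QuotientAddGroup.mk x) (QuotientAddGroup.mk y) ↔ Lt le x y := by
  unfold Lt
  rw [imageRel_mk_iff hpo hc hK, imageRel_mk_iff hpo hc hK]
  constructor
  · rintro ⟨h1 | h1, h2⟩
    · exact h1
    · exact absurd (Or.inr h1.symm') h2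
  · intro h
    refine ⟨Or.inl h, ?_⟩
    rintro (h' | h')
    · exact h.2 h'.1
    · exact not_lt_of_peq h'.symm' h

lemma predLe_imageRel_mk_iff (hpo : IsPartialOrderRel le) (hc : IsCompat le)
    (hK : (K : Set G) = {x : G | PredLe le x 0 ∧ PredLe le 0 x}) {x y : G} :
    PredLe (imageRel K le) (QuotientAddGroup.mk x) (QuotientAddGroup.mk y) ↔
      PredLe le x y := by
  constructor
  · intro h z hz
    exact (lt_imageRel_mk_iff hpo hc hK).mp
      (h _ ((lt_imageRel_mk_iff hpo hc hK).mpr hz))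
  · intro h ζ hζ
    obtain ⟨z, rfl⟩ := QuotientAddGroup.mk_surjective ζ
    exact (lt_imageRel_mk_iff hpo hc hK).mpr
      (h z ((lt_imageRel_mk_iff hpo hc hK).mp hζ))

lemma imageRel_compat {H : Type*} [AddGroup H] (KH : AddSubgroup H) [KH.Normal]
    {r : H → H → Prop} (hc : IsCompat r) : IsCompat (imageRel KH r) := by
  rintro α β ξ η ⟨x, y, hx, hy, hxy⟩
  obtain ⟨a, rfl⟩ := QuotientAddGroup.mk_surjective α
  obtain ⟨b, rfl⟩ := QuotientAddGroup.mk_surjective β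
  subst hx; subst hy
  exact ⟨a + x + b, a + y + b, rfl, rfl, hc a b x y hxy⟩

/-- Full characterization of the threshold-group property for `G ⧸ K`. -/
lemma thresholdGroup_GK_iff (hpo : IsPartialOrderRel le) (hc : IsCompat le) [K.Normal]
    (hK : (K : Set G) = {x : G | PredLe le x 0 ∧ PredLe le 0 x}) :
    IsThresholdGroup (G ⧸ K) (imageRel K le) ↔
      ∀ x y : G, PredLe le x y ∨ PredLe le y x := by
  constructor
  · intro h x y
    rcases h.2.2.2.1 (QuotientAddGroup.mk x) (QuotientAddGroup.mk y) with h' | h'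
    · exact Or.inl ((predLe_imageRel_mk_iff hpo hc hK).mp h')
    · exact Or.inr ((predLe_imageRel_mk_iff hpo hc hK).mp h')
  · intro hT
    have hcompat : IsCompat (imageRel K le) := imageRel_compat K hc
    refine ⟨⟨?_, ?_, ?_⟩, hcompat, ?_, ?_, ?_⟩
    · -- reflexive
      intro α
      obtain ⟨x, rfl⟩ := QuotientAddGroup.mk_surjective α
      exact ⟨x, x, rfl, rfl, hpo.1 x⟩
    · -- transitive
      intro α β γ h1 h2
      obtain ⟨x, rfl⟩ := QuotientAddGroup.mk_surjective α
      obtain ⟨y, rfl⟩ := QuotientAddGroup.mk_surjective β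
      obtain ⟨z, rfl⟩ := QuotientAddGroup.mk_surjective γ
      rw [imageRel_mk_iff hpo hc hK] at h1 h2 ⊢
      rcases h1 with h1 | h1 <;> rcases h2 with h2 | h2
      · exact Or.inl (lt_trans' hpo h1 h2)
      · exact Or.inl (lt_of_peq_right h2 h1)
      · exact Or.inl (lt_of_peq_left hc h1.symm' h2)
      · exact Or.inr (h1.trans' h2)
    · -- antisymmetric
      intro α β h1 h2
      obtain ⟨x, rfl⟩ := QuotientAddGroup.mk_surjective α
      obtain ⟨y, rfl⟩ := QuotientAddGroup.mk_surjective β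
      rw [imageRel_mk_iff hpo hc hK] at h1 h2
      rw [mk_eq_iff_peq hc hK]
      rcases h1 with h1 | h1
      · rcases h2 with h2 | h2
        · exact absurd h2.1 h1.2
        · exact absurd h1 (fun hh => not_lt_of_peq h2.symm' hh)
      · exact h1
    · -- PredLe = SuccLe
      intro α β
      exact predLe_iff_succLe hcompat α β
    · -- total
      intro α β
      obtain ⟨x, rfl⟩ := QuotientAddGroup.mk_surjective α
      obtain ⟨y, rfl⟩ := QuotientAddGroup.mk_surjective β
      rcases hT x y with h | h
      · exact Or.inl ((predLe_imageRel_mk_iff hpo hc hK).mpr h)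
      · exact Or.inr ((predLe_imageRel_mk_iff hpo hc hK).mpr h)
    · -- antisymmetric on traces
      intro α β h1 h2
      obtain ⟨x, rfl⟩ := QuotientAddGroup.mk_surjective α
      obtain ⟨y, rfl⟩ := QuotientAddGroup.mk_surjective β
      rw [predLe_imageRel_mk_iff hpo hc hK] at h1 h2
      exact (mk_eq_iff_peq hc hK).mpr ⟨h1, h2⟩

end QuotLemmas
section ILemmas

variable {G : Type*} [AddGroup G] {le : G → G → Prop} {K I : AddSubgroup G}

/-- If `y` lies in the incomparability component of `0`, then predecessors of `x`
inside `I` determine all predecessors. -/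
lemma predLe_of_restricted (hpo : IsPartialOrderRel le)
    (hI : (I : Set G) = {x : G | Relation.ReflTransGen (fun a b => Incomp le a b) 0 x})
    {x y : G} (hy : y ∈ I)
    (h : ∀ z : G, z ∈ I → Lt le z x → Lt le z y) : PredLe le x y := by
  intro z hzx
  by_cases hzy : le z y
  · by_cases hyz : le y z
    · have heq : z = y := hpo.2.2 _ _ hzy hyz
      subst heq
      exact absurd (h z hy hzx) (lt_irrefl' z)
    · exact ⟨hzy, hyz⟩
  · by_cases hyz : le y z
    · exact absurd (h y hy (lt_of_le_of_lt' hpo hyz hzx)) (lt_irrefl' y)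
    · have hz : z ∈ I := by
        rw [← SetLike.mem_coe, hI] at hy ⊢
        exact Relation.ReflTransGen.tail hy ⟨hyz, hzy⟩
      exact h z hz hzx

lemma mk_eq_iff_peq_I (hc : IsCompat le)
    (hK : (K : Set G) = {x : G | PredLe le x 0 ∧ PredLe le 0 x}) {x y : I} :
    (QuotientAddGroup.mk x : ↥I ⧸ K.addSubgroupOf I) = QuotientAddGroup.mk y ↔
      PEq le (x : G) (y : G) := by
  rw [QuotientAddGroup.eq, AddSubgroup.mem_addSubgroupOf]
  have hco : ((-x + y : I) : G) = -(x : G) + (y : G) := by push_cast; rfl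
  rw [hco, ← peq_iff_mem hc hK]

lemma imageRel_mk_I_iff (hpo : IsPartialOrderRel le) (hc : IsCompat le)
    (hK : (K : Set G) = {x : G | PredLe le x 0 ∧ PredLe le 0 x}) {x y : I} :
    imageRel (K.addSubgroupOf I) (fun a b : I => le (a : G) (b : G))
        (QuotientAddGroup.mk x) (QuotientAddGroup.mk y) ↔
      (Lt le (x : G) (y : G) ∨ PEq le (x : G) (y : G)) := by
  constructor
  · rintro ⟨u, v, hu, hv, huv⟩
    have hux : PEq le (u : G) (x : G) := (mk_eq_iff_peq_I hc hK).mp hu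
    have hvy : PEq le (v : G) (y : G) := (mk_eq_iff_peq_I hc hK).mp hv
    by_cases h : le (v : G) (u : G)
    · have heq : u = v := Subtype.coe_injective (hpo.2.2 _ _ huv h)
      subst heq
      exact Or.inr (hux.symm'.trans' hvy)
    · exact Or.inl (lt_of_peq_right hvy (lt_of_peq_left hc hux ⟨huv, h⟩))
  · rintro (h | h)
    · exact ⟨x, y, rfl, rfl, h.1⟩
    · exact ⟨x, x, rfl, (mk_eq_iff_peq_I hc hK).mpr h, hpo.1 (x : G)⟩

lemma lt_imageRel_mk_I_iff (hpo : IsPartialOrderRel le) (hc : IsCompat le)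
    (hK : (K : Set G) = {x : G | PredLe le x 0 ∧ PredLe le 0 x}) {x y : I} :
    Lt (imageRel (K.addSubgroupOf I) (fun a b : I => le (a : G) (b : G)))
        (QuotientAddGroup.mk x) (QuotientAddGroup.mk y) ↔ Lt le (x : G) (y : G) := by
  unfold Lt
  rw [imageRel_mk_I_iff hpo hc hK, imageRel_mk_I_iff hpo hc hK]
  constructor
  · rintro ⟨h1 | h1, h2⟩
    · exact h1
    · exact absurd (Or.inr h1.symm') h2
  · intro h
    refine ⟨Or.inl h, ?_⟩
    rintro (h' | h')
    · exact h.2 h'.1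
    · exact not_lt_of_peq h'.symm' h

lemma predLe_imageRel_mk_I_iff (hpo : IsPartialOrderRel le) (hc : IsCompat le)
    (hK : (K : Set G) = {x : G | PredLe le x 0 ∧ PredLe le 0 x})
    (hI : (I : Set G) = {x : G | Relation.ReflTransGen (fun a b => Incomp le a b) 0 x})
    {x y : I} :
    PredLe (imageRel (K.addSubgroupOf I) (fun a b : I => le (a : G) (b : G)))
        (QuotientAddGroup.mk x) (QuotientAddGroup.mk y) ↔
      PredLe le (x : G) (y : G) := by
  constructor
  · intro h
    refine predLe_of_restricted hpo hI y.2 ?_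
    intro z hz hzx
    exact (lt_imageRel_mk_I_iff hpo hc hK).mp
      (h _ ((lt_imageRel_mk_I_iff hpo hc hK (x := ⟨z, hz⟩)).mpr hzx))
  · intro h ζ hζ
    obtain ⟨z, rfl⟩ := QuotientAddGroup.mk_surjective ζ
    exact (lt_imageRel_mk_I_iff hpo hc hK).mpr
      (h (z : G) ((lt_imageRel_mk_I_iff hpo hc hK).mp hζ))

/-- Full characterization of the threshold-group property for `I ⧸ (K ∩ I)`. -/
lemma thresholdGroup_IK_iff (hpo : IsPartialOrderRel le) (hc : IsCompat le)
    [(K.addSubgroupOf I).Normal]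
    (hK : (K : Set G) = {x : G | PredLe le x 0 ∧ PredLe le 0 x})
    (hI : (I : Set G) = {x : G | Relation.ReflTransGen (fun a b => Incomp le a b) 0 x}) :
    IsThresholdGroup (↥I ⧸ K.addSubgroupOf I)
        (imageRel (K.addSubgroupOf I) (fun a b : I => le (a : G) (b : G))) ↔
      ∀ x y : I, PredLe le (x : G) (y : G) ∨ PredLe le (y : G) (x : G) := by
  constructor
  · intro h x y
    rcases h.2.2.2.1 (QuotientAddGroup.mk x) (QuotientAddGroup.mk y) with h' | h'
    · exact Or.inl ((predLe_imageRel_mk_I_iff hpo hc hK hI).mp h')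
    · exact Or.inr ((predLe_imageRel_mk_I_iff hpo hc hK hI).mp h')
  · intro hT
    have hcI : IsCompat (fun a b : I => le (a : G) (b : G)) := by
      intro a b u v h
      have := hc (a : G) (b : G) (u : G) (v : G) h
      simpa using this
    have hcompat : IsCompat (imageRel (K.addSubgroupOf I)
        (fun a b : I => le (a : G) (b : G))) := imageRel_compat _ hcI
    refine ⟨⟨?_, ?_, ?_⟩, hcompat, ?_, ?_, ?_⟩
    · intro α
      obtain ⟨x, rfl⟩ := QuotientAddGroup.mk_surjective α
      exact ⟨x, x, rfl, rfl, hpo.1 (x : G)⟩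
    · intro α β γ h1 h2
      obtain ⟨x, rfl⟩ := QuotientAddGroup.mk_surjective α
      obtain ⟨y, rfl⟩ := QuotientAddGroup.mk_surjective β
      obtain ⟨z, rfl⟩ := QuotientAddGroup.mk_surjective γ
      rw [imageRel_mk_I_iff hpo hc hK] at h1 h2 ⊢
      rcases h1 with h1 | h1 <;> rcases h2 with h2 | h2
      · exact Or.inl (lt_trans' hpo h1 h2)
      · exact Or.inl (lt_of_peq_right h2 h1)
      · exact Or.inl (lt_of_peq_left hc h1.symm' h2)
      · exact Or.inr (h1.trans' h2)
    · intro α β h1 h2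
      obtain ⟨x, rfl⟩ := QuotientAddGroup.mk_surjective α
      obtain ⟨y, rfl⟩ := QuotientAddGroup.mk_surjective β
      rw [imageRel_mk_I_iff hpo hc hK] at h1 h2
      rw [mk_eq_iff_peq_I hc hK]
      rcases h1 with h1 | h1
      · rcases h2 with h2 | h2
        · exact absurd h2.1 h1.2
        · exact absurd h1 (fun hh => not_lt_of_peq h2.symm' hh)
      · exact h1
    · intro α β
      exact predLe_iff_succLe hcompat α β
    · intro α β
      obtain ⟨x, rfl⟩ := QuotientAddGroup.mk_surjective α
      obtain ⟨y, rfl⟩ := QuotientAddGroup.mk_surjective β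
      rcases hT x y with h | h
      · exact Or.inl ((predLe_imageRel_mk_I_iff hpo hc hK hI).mpr h)
      · exact Or.inr ((predLe_imageRel_mk_I_iff hpo hc hK hI).mpr h)
    · intro α β h1 h2
      obtain ⟨x, rfl⟩ := QuotientAddGroup.mk_surjective α
      obtain ⟨y, rfl⟩ := QuotientAddGroup.mk_surjective β
      rw [predLe_imageRel_mk_I_iff hpo hc hK hI] at h1 h2
      exact (mk_eq_iff_peq_I hc hK).mpr ⟨h1, h2⟩

/-- From totality of `≤_pred` on `I`, no `2 ⊕ 2` embeds (globally). -/
lemma no2p2_of_I_total (hc : IsCompat le)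
    (hI : (I : Set G) = {x : G | Relation.ReflTransGen (fun a b => Incomp le a b) 0 x})
    (hT : ∀ x y : I, PredLe le (x : G) (y : G) ∨ PredLe le (y : G) (x : G)) :
    ¬ Embeds2p2 le := by
  rintro ⟨a, b, c, d, hab, hcd, hac, had, hbc, _hbd⟩
  have hmem : ∀ z : G, Relation.ReflTransGen (fun a b => Incomp le a b) 0 z → z ∈ I := by
    intro z hz
    rw [← SetLike.mem_coe, hI]
    exact hz
  have tr : ∀ u v : G, Lt le u v → Lt le (-a + u) (-a + v) := by
    intro u v h
    have := (compat_lt_iff hc (-a) 0 u v).mpr h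
    simpa using this
  have trI : ∀ u v : G, Incomp le u v → Incomp le (-a + u) (-a + v) := by
    intro u v h
    have := (compat_incomp_iff hc (-a) 0 u v).mpr h
    simpa using this
  -- translated configuration
  have h0b : Lt le 0 (-a + b) := by simpa using tr a b hab
  have hcd' : Lt le (-a + c) (-a + d) := tr c d hcd
  have h0c : Incomp le 0 (-a + c) := by simpa using trI a c hac
  have h0d : Incomp le 0 (-a + d) := by simpa using trI a d had
  have hbc' : Incomp le (-a + b) (-a + c) := trI b c hbc
  have hcmem : (-a + c) ∈ I := hmem _ (Relation.ReflTransGen.single h0c)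
  have hdmem : (-a + d) ∈ I := hmem _ (Relation.ReflTransGen.single h0d)
  have hbmem : (-a + b) ∈ I := hmem _
    (Relation.ReflTransGen.tail (Relation.ReflTransGen.single h0c)
      ⟨hbc'.2, hbc'.1⟩)
  rcases hT ⟨-a + b, hbmem⟩ ⟨-a + d, hdmem⟩ with h | h
  · exact h0d.1 (h 0 h0b).1
  · exact hbc'.2 (h _ hcd').1
end ILemmas
/-- For an ordered group `G`, with `K = K(G)` and `I = I(G)(0)`:
the order is a semiorder iff `I(G)(0)/K(G)` (with the image order) is a threshold group
iff `G/K(G)` (with the image order) is a threshold group. -/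
theorem semiorder_iff_quotient_threshold {G : Type*} [AddGroup G] (le : G → G → Prop)
    (hpo : IsPartialOrderRel le) (hc : IsCompat le)
    (K I : AddSubgroup G)
    (hK : (K : Set G) = {x : G | PredLe le x 0 ∧ PredLe le 0 x})
    (hI : (I : Set G) = {x : G | Relation.ReflTransGen (fun a b => Incomp le a b) 0 x})
    [K.Normal] [(K.addSubgroupOf I).Normal] :
    ((¬ Embeds2p2 le ∧ ¬ Embeds3p1 le) ↔
      IsThresholdGroup (↥I ⧸ K.addSubgroupOf I)
        (imageRel (K.addSubgroupOf I) (fun a b : I => le (a : G) (b : G)))) ∧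
    ((¬ Embeds2p2 le ∧ ¬ Embeds3p1 le) ↔
      IsThresholdGroup (G ⧸ K) (imageRel K le)) := by

  have hps : ∀ x y : G, PredLe le x y ↔ SuccLe le x y := predLe_iff_succLe hc
  have keyA : (¬ Embeds2p2 le ∧ ¬ Embeds3p1 le) ↔
      (∀ x y : G, PredLe le x y ∨ PredLe le y x) := by
    constructor
    · intro h
      exact predLe_total_of_no2p2 hpo h.1
    · intro hT
      exact ⟨no2p2_of_predLe_total hT, no3p1_of_predLe_total hT hps⟩
  constructor
  · rw [keyA, thresholdGroup_IK_iff hpo hc hK hI]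
    constructor
    · intro hT x y
      exact hT _ _
    · intro hTI
      exact predLe_total_of_no2p2 hpo (no2p2_of_I_total hc hI hTI)
  · rw [keyA, thresholdGroup_GK_iff hpo hc hK]

end ThrPaper
end

section
/- Let G = (X, +, ≤) be an ordered group whose order is a semiorder, let A(G) := {x ∈ X : ℤx is an antichain}, and let I(G)(0) be the connected component of 0 in the incomparability graph of (X, ≤). If H is a convex subgroup of G, then either H ⊆ A(G), in which case H is an antichain, or I(G)(0) ⊆ H. Moreover, if I(G)(0) ⊆ H and H is a normal subgroup of G, then the quotient group G/H with the image order is totally ordered and G is the lexicographical sum of the cosets of H: for x, y in distinct cosets of H, x < y iff x + H < y + H. -/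
namespace ThrPaper

universe u

variable {X : Type*}

section Helpers
variable {G : Type*} [AddGroup G] {le : G → G → Prop}

lemma le_untranslate (hc : IsCompat le) {u v a b : G} (h : le (a + u + b) (a + v + b)) :
    le u v := by
  have := hc (-a) (-b) _ _ h
  simpa [add_assoc] using this

lemma incomp_translate (hc : IsCompat le) {u v : G} (a b : G) (h : Incomp le u v) :
    Incomp le (a + u + b) (a + v + b) :=
  ⟨fun hle => h.1 (le_untranslate hc hle), fun hle => h.2 (le_untranslate hc hle)⟩

end Helpers

/-- Let `G` be an ordered group whose order is a semiorder and let `H`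
be a convex subgroup. Then either `H ⊆ A(G)` (in which case `H` is an antichain) or
`I(G)(0) ⊆ H`; and if the latter holds and `H` is normal, then `G/H` with the image order
is totally ordered and `G` is the lexicographical sum of the cosets of `H`. -/
theorem convex_subgroup_of_semiordered_group {G : Type*} [AddGroup G] (le : G → G → Prop)
    (hpo : IsPartialOrderRel le) (hc : IsCompat le)
    (hsemi : ¬ Embeds2p2 le ∧ ¬ Embeds3p1 le)
    (H : AddSubgroup G)
    (hconv : ∀ x y z : G, x ∈ H → y ∈ H → le x z → le z y → z ∈ H) :
    -- either `H ⊆ A(G)`, in which case `H` is an antichain, or `I(G)(0) ⊆ H`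
    (((H : Set G) ⊆ {x : G | ∀ m n : ℤ, m • x ≠ n • x → Incomp le (m • x) (n • x)} ∧
        ∀ x ∈ H, ∀ y ∈ H, x ≠ y → Incomp le x y) ∨
      {x : G | Relation.ReflTransGen (fun a b => Incomp le a b) 0 x} ⊆ (H : Set G)) ∧
    -- if moreover `I(G)(0) ⊆ H` and `H` is normal, the quotient `G/H` is totally
    -- ordered and `G` is the lexicographical sum of the cosets of `H`
    ({x : G | Relation.ReflTransGen (fun a b => Incomp le a b) 0 x} ⊆ (H : Set G) →
      H.Normal →
      IsPartialOrderRel (imageRel H le) ∧ IsTotalRel (imageRel H le) ∧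
      ∀ x y : G, (QuotientAddGroup.mk x : G ⧸ H) ≠ QuotientAddGroup.mk y →
        (Lt le x y ↔
          Lt (imageRel H le) (QuotientAddGroup.mk x) (QuotientAddGroup.mk y))) := by
  obtain ⟨hrefl, htrans, hanti⟩ := hpo
  obtain ⟨h22, h31⟩ := hsemi
  -- A convenient symmetric form of incomparability
  have isymm : ∀ {x y : G}, Incomp le x y → Incomp le y x := fun h => ⟨h.2, h.1⟩
  constructor
  · by_cases hA : (H : Set G) ⊆ {x : G | ∀ m n : ℤ, m • x ≠ n • x → Incomp le (m • x) (n • x)}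
    · left
      refine ⟨hA, fun x hx y hy hne => ?_⟩
      have hz : -x + y ∈ H := H.add_mem (H.neg_mem hx) hy
      have hzA := hA hz
      have hz0 : (0 : ℤ) • (-x + y) ≠ (1 : ℤ) • (-x + y) := by
        simp only [zero_zsmul, one_zsmul]
        intro h0
        exact hne (by rwa [eq_comm, neg_add_eq_zero] at h0)
      have h0z : Incomp le 0 (-x + y) := by
        have := hzA 0 1 hz0
        simpa using this
      have := incomp_translate hc x 0 h0z
      simpa using this
    · right
      -- H contains a strictly positive element g
      obtain ⟨a, haH, ha⟩ := Set.not_subset.mp hA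
      simp only [Set.mem_setOf_eq, not_forall] at ha
      obtain ⟨m, n, hmn, hni⟩ := ha
      have hcomp : le (m • a) (n • a) ∨ le (n • a) (m • a) := by
        by_contra hcon
        push_neg at hcon
        exact hni ⟨hcon.1, hcon.2⟩
      have key : ∀ u v : G, u ∈ H → v ∈ H → u ≠ v → le u v →
          ∃ g, g ∈ H ∧ le 0 g ∧ ¬ le g 0 := by
        intro u v hu hv huv huvle
        refine ⟨-u + v, H.add_mem (H.neg_mem hu) hv, ?_, ?_⟩
        · have := hc (-u) 0 _ _ huvle
          simpa [add_assoc] using this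
        · intro hle0
          have h0le : le 0 (-u + v) := by
            have := hc (-u) 0 _ _ huvle
            simpa [add_assoc] using this
          have : -u + v = 0 := hanti _ _ hle0 h0le
          exact huv (by rwa [neg_add_eq_zero] at this)
      have hobt : ∃ g, g ∈ H ∧ le 0 g ∧ ¬ le g 0 := by
        rcases hcomp with h | h
        · exact key _ _ (H.zsmul_mem haH m) (H.zsmul_mem haH n) hmn h
        · exact key _ _ (H.zsmul_mem haH n) (H.zsmul_mem haH m) (Ne.symm hmn) h
      obtain ⟨g, hgH, hg0, hgn0⟩ := hobt
      have hng : le (-g) 0 := by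
        have := hc (-g) 0 _ _ hg0
        simpa [add_assoc] using this
      have hngn : ¬ le 0 (-g) := by
        intro h
        have hg : g = 0 := neg_eq_zero.mp (hanti _ _ h hng).symm
        subst hg
        exact hgn0 (hrefl 0)
      -- key bound: any element incomparable to x lies between x - 2g and x + 2g
      have bound : ∀ x y : G, Incomp le x y → le (x + -g + -g) y ∧ le y (x + g + g) := by
        intro x y hxy
        have lt01 : ∀ w : G, Lt le w (w + g) := by
          intro w
          constructor
          · have := hc w 0 _ _ hg0; simpa using this
          · intro h
            have : le g 0 := by
              have := hc (-w) 0 _ _ h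
              simpa [add_assoc] using this
            exact hgn0 this
        have lt01' : ∀ w : G, Lt le (w + -g) w := by
          intro w
          have := lt01 (w + -g)
          simpa [add_assoc] using this
        constructor
        · -- lower bound via chain x - 2g < x - g < x and no 3 ⊕ 1
          by_cases h1 : Incomp le y (x + -g)
          · by_cases h2 : Incomp le y (x + -g + -g)
            · exact absurd ⟨x + -g + -g, x + -g, x, y, lt01' (x + -g), lt01' x,
                h2, h1, isymm hxy⟩ h31
            · rcases not_and_or.mp h2 with h | h
              · push_neg at h
                exact absurd (htrans _ _ _ (htrans _ _ _ h (lt01' (x + -g)).1)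
                  (lt01' x).1) hxy.2
              · push_neg at h
                exact h
          · rcases not_and_or.mp h1 with h | h
            · push_neg at h
              exact absurd (htrans _ _ _ h (lt01' x).1) hxy.2
            · push_neg at h
              exact htrans _ _ _ (lt01' (x + -g)).1 h
        · -- upper bound via chain x < x + g < x + g + g and no 3 ⊕ 1
          by_cases h1 : Incomp le y (x + g)
          · by_cases h2 : Incomp le y (x + g + g)
            · exact absurd ⟨x, x + g, x + g + g, y, lt01 x, lt01 (x + g),
                isymm hxy, h1, h2⟩ h31
            · rcases not_and_or.mp h2 with h | h
              · push_neg at h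
                exact h
              · push_neg at h
                exact absurd (htrans _ _ _ (htrans _ _ _ (lt01 x).1 (lt01 (x + g)).1) h)
                  hxy.1
          · rcases not_and_or.mp h1 with h | h
            · push_neg at h
              exact htrans _ _ _ h (lt01 (x + g)).1
            · push_neg at h
              exact absurd (htrans _ _ _ (lt01 x).1 h) hxy.1
      intro x hx
      simp only [Set.mem_setOf_eq] at hx
      induction hx with
      | refl => exact H.zero_mem
      | tail _ hbc ih =>
        rename_i b c _
        obtain ⟨hlo, hhi⟩ := bound b c hbc
        exact hconv (b + -g + -g) (b + g + g)  c
          (H.add_mem (H.add_mem ih (H.neg_mem hgH)) (H.neg_mem hgH))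
          (H.add_mem (H.add_mem ih hgH) hgH) hlo hhi
  · intro hI _
    -- incomparable elements are in the same coset
    have mkeq : ∀ {u v : G}, Incomp le u v →
        (QuotientAddGroup.mk u : G ⧸ H) = QuotientAddGroup.mk v := by
      intro u v h
      have h0 : Incomp le 0 (-u + v) := by
        have := incomp_translate hc (-u) 0 h
        simpa [add_assoc] using this
      have : -u + v ∈ H := hI (Relation.ReflTransGen.single h0)
      exact (QuotientAddGroup.eq).mpr this
    have total' : ∀ u v : G,
        (QuotientAddGroup.mk u : G ⧸ H) ≠ QuotientAddGroup.mk v → le u v ∨ le v u := by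
      intro u v hne
      by_contra hcon
      push_neg at hcon
      exact hne (mkeq ⟨hcon.1, hcon.2⟩)
    -- the direction of comparability only depends on the cosets
    have constR : ∀ u v v' : G, (QuotientAddGroup.mk u : G ⧸ H) ≠ QuotientAddGroup.mk v →
        le u v → (QuotientAddGroup.mk v' : G ⧸ H) = QuotientAddGroup.mk v → le u v' := by
      intro u v v' hne huv hvv'
      have hne' : (QuotientAddGroup.mk u : G ⧸ H) ≠ QuotientAddGroup.mk v' := by
        rw [hvv']; exact hne
      rcases total' u v' hne' with h | h
      · exact h
      · exfalso
        have h1 : le 0 (-v' + u) := by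
          have := hc (-v') 0 _ _ h
          simpa [add_assoc] using this
        have h2 : le (-v' + u) (-v' + v) := by
          have := hc (-v') 0 _ _ huv
          simpa [add_assoc] using this
        have hVH : -v' + v ∈ H := (QuotientAddGroup.eq).mp hvv'
        have : -v' + u ∈ H := hconv 0 (-v' + v) (-v' + u) H.zero_mem hVH h1 h2
        have : (QuotientAddGroup.mk v' : G ⧸ H) = QuotientAddGroup.mk u :=
          (QuotientAddGroup.eq).mpr this
        exact hne (this ▸ hvv' ▸ rfl)
    have constL : ∀ u v u' : G, (QuotientAddGroup.mk u : G ⧸ H) ≠ QuotientAddGroup.mk v →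
        le u v → (QuotientAddGroup.mk u' : G ⧸ H) = QuotientAddGroup.mk u → le u' v := by
      intro u v u' hne huv huu'
      have hne' : (QuotientAddGroup.mk u' : G ⧸ H) ≠ QuotientAddGroup.mk v := by
        rw [huu']; exact hne
      rcases total' u' v hne' with h | h
      · exact h
      · exfalso
        have h1 : le 0 (-u + v) := by
          have := hc (-u) 0 _ _ huv
          simpa [add_assoc] using this
        have h2 : le (-u + v) (-u + u') := by
          have := hc (-u) 0 _ _ h
          simpa [add_assoc] using this
        have hUH : -u + u' ∈ H := (QuotientAddGroup.eq).mp huu'.symm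
        have : -u + v ∈ H := hconv 0 (-u + u') (-u + v) H.zero_mem hUH h1 h2
        exact hne ((QuotientAddGroup.eq).mpr this)
    have const : ∀ u v u' v' : G,
        (QuotientAddGroup.mk u : G ⧸ H) ≠ QuotientAddGroup.mk v → le u v →
        (QuotientAddGroup.mk u' : G ⧸ H) = QuotientAddGroup.mk u →
        (QuotientAddGroup.mk v' : G ⧸ H) = QuotientAddGroup.mk v → le u' v' := by
      intro u v u' v' hne huv hu hv
      have h1 : le u v' := constR u v v' hne huv hv
      have hne' : (QuotientAddGroup.mk u : G ⧸ H) ≠ QuotientAddGroup.mk v' := by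
        rw [hv]; exact hne
      exact constL u v' u' hne' h1 hu
    refine ⟨⟨?_, ?_, ?_⟩, ?_, ?_⟩
    · -- reflexivity
      intro α
      induction α using QuotientAddGroup.induction_on with
      | H a => exact ⟨a, a, rfl, rfl, hrefl a⟩
    · -- transitivity
      rintro α β γ ⟨a, b, ha, hb, hab⟩ ⟨b', c, hb', hcg, hbc⟩
      by_cases hag : α = γ
      · exact ⟨a, a, ha, hag ▸ ha, hrefl a⟩
      by_cases habq : α = β
      · exact ⟨b', c, hb'.trans habq.symm, hcg, hbc⟩
      by_cases hbg : β = γ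
      · exact ⟨a, b, ha, hb.trans hbg, hab⟩
      · have hne : (QuotientAddGroup.mk b' : G ⧸ H) ≠ QuotientAddGroup.mk c := by
          rw [hb', hcg]; exact hbg
        have hbc' : le b c := const b' c b c hne hbc (hb.trans hb'.symm) rfl
        exact ⟨a, c, ha, hcg, htrans _ _ _ hab hbc'⟩
    · -- antisymmetry
      rintro α β ⟨a, b, ha, hb, hab⟩ ⟨b', a', hb', ha', hba⟩
      by_contra hne
      have hne' : (QuotientAddGroup.mk b' : G ⧸ H) ≠ QuotientAddGroup.mk a' := by
        rw [hb', ha']; exact Ne.symm hne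
      have hba' : le b a := const b' a' b a hne' hba (hb.trans hb'.symm) (ha.trans ha'.symm)
      have : a = b := hanti a b hab hba'
      exact hne (ha ▸ hb ▸ this ▸ rfl)
    · -- totality
      intro α β
      induction α using QuotientAddGroup.induction_on with
      | H a =>
        induction β using QuotientAddGroup.induction_on with
        | H b =>
          by_cases h : (QuotientAddGroup.mk a : G ⧸ H) = QuotientAddGroup.mk b
          · exact Or.inl ⟨a, a, rfl, h, hrefl a⟩
          · rcases total' a b h with hle | hle
            · exact Or.inl ⟨a, b, rfl, rfl, hle⟩
            · exact Or.inr ⟨b, a, rfl, rfl, hle⟩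
    · -- the lexicographic property
      intro x y hne
      constructor
      · rintro ⟨hxy, hnyx⟩
        refine ⟨⟨x, y, rfl, rfl, hxy⟩, ?_⟩
        rintro ⟨b, a, hb, ha, hba⟩
        have hne' : (QuotientAddGroup.mk b : G ⧸ H) ≠ QuotientAddGroup.mk a := by
          rw [hb, ha]; exact Ne.symm hne
        have : le y x := const b a y x hne' hba hb.symm ha.symm
        exact hne (congrArg _ (hanti x y hxy this))
      · rintro ⟨⟨a, b, ha, hb, hab⟩, h2⟩
        have hne' : (QuotientAddGroup.mk a : G ⧸ H) ≠ QuotientAddGroup.mk b := by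
          rw [ha, hb]; exact hne
        have hxy : le x y := const a b x y hne' hab ha.symm hb.symm
        refine ⟨hxy, fun hyx => h2 ⟨y, x, rfl, rfl, hyx⟩⟩


end ThrPaper
end

section
/- Let G = (X, +, ≤) be a threshold group whose threshold is attained. Then the order ≤ has dimension at most 3: there exist three total orders on X, each extending ≤, whose intersection is ≤ (i.e., x ≤ y if and only if x is below y in each of the three total orders). -/
namespace ThrPaper

universe u

variable {X : Type*}

structure Ctx (G : Type*) [AddGroup G] where
  le : G → G → Prop
  hrefl : ∀ x, le x x
  htrans : ∀ x y z, le x y → le y z → le x z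
  hanti : ∀ x y, le x y → le y x → x = y
  hc : IsCompat le
  htot : ∀ x y, PredLe le x y ∨ PredLe le y x
  hTanti : ∀ x y, PredLe le x y → PredLe le y x → x = y
  m : G
  hm : Lt le 0 m
  hmin : ∀ x, Lt le 0 x → PredLe le m x

namespace Ctx

variable {G : Type*} [AddGroup G] (C : Ctx G)

def T : G → G → Prop := PredLe C.le

variable {C}

lemma T_refl (x : G) : C.T x x := fun _ h => h

lemma T_trans {x y z : G} (h1 : C.T x y) (h2 : C.T y z) : C.T x z :=
  fun w hw => h2 w (h1 w hw)

lemma T_total (x y : G) : C.T x y ∨ C.T y x := C.htot x y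

lemma T_anti {x y : G} (h1 : C.T x y) (h2 : C.T y x) : x = y := C.hTanti x y h1 h2

lemma le_T {x y : G} (h : C.le x y) : C.T x y := by
  intro z hz
  exact ⟨C.htrans _ _ _ hz.1 h, fun hyz => hz.2 (C.htrans _ _ _ h hyz)⟩

lemma not_T {x y : G} (h : ¬ C.T x y) : C.T y x := (T_total x y).resolve_left h

/-- translation cancellation helper -/
private lemma tr_cancel (a b x : G) : -a + (a + x + b) + -b = x := by
  simp [add_assoc]

lemma le_tr_iff {a b x y : G} : C.le (a + x + b) (a + y + b) ↔ C.le x y := by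
  constructor
  · intro h
    have := C.hc (-a) (-b) _ _ h
    rwa [tr_cancel, tr_cancel] at this
  · exact C.hc a b x y

lemma lt_tr_iff {a b x y : G} : Lt C.le (a + x + b) (a + y + b) ↔ Lt C.le x y := by
  unfold Lt; rw [le_tr_iff, le_tr_iff]

private lemma tr_cancel2 (a b z : G) : a + (-a + z + -b) + b = z := by
  simp [add_assoc]

lemma T_tr_iff {a b x y : G} : C.T (a + x + b) (a + y + b) ↔ C.T x y := by
  constructor
  · intro h z hz
    have h1 : Lt C.le (a + z + b) (a + x + b) := lt_tr_iff.2 hz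
    have h2 := h _ h1
    exact lt_tr_iff.1 h2
  · intro h z hz
    have h1 : Lt C.le (-a + z + -b) x := by
      have := (@lt_tr_iff _ _ C a b (-a + z + -b) x).1
      rw [tr_cancel2] at this
      exact this hz
    have h2 := h _ h1
    have h3 : Lt C.le (a + (-a + z + -b) + b) (a + y + b) := lt_tr_iff.2 h2
    rwa [tr_cancel2] at h3

lemma T_addl {x y : G} (a : G) (h : C.T x y) : C.T (a + x) (a + y) := by
  have := (@T_tr_iff _ _ C a 0 x y).2 h
  simpa using this

lemma T_addr {x y : G} (b : G) (h : C.T x y) : C.T (x + b) (y + b) := by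
  have := (@T_tr_iff _ _ C 0 b x y).2 h
  simpa using this

lemma T_cancel_l {a x y : G} (h : C.T (a + x) (a + y)) : C.T x y := by
  have h2 := T_addl (-a) h
  rw [← add_assoc, ← add_assoc, neg_add_cancel, zero_add, zero_add] at h2
  exact h2

lemma T_neg {x y : G} (h : C.T x y) : C.T (-y) (-x) := by
  have h1 : C.T (-y + x + -x) (-y + y + -x) := (@T_tr_iff _ _ C (-y) (-x) x y).2 h
  have e1 : -y + x + -x = -y := by simp [add_assoc]
  have e2 : -y + y + -x = -x := by simp [add_assoc]
  rwa [e1, e2] at h1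

lemma pos_iff_T {x : G} : Lt C.le 0 x ↔ C.T C.m x := by
  constructor
  · exact fun h => C.hmin x h
  · exact fun h => h 0 C.hm

lemma lt_iff_diff {x y : G} : Lt C.le x y ↔ Lt C.le 0 (-x + y) := by
  have := @lt_tr_iff _ _ C (-x) 0 x y
  simp only [add_zero] at this
  rw [← this]
  simp

lemma le_iff_diff {x y : G} : C.le x y ↔ x = y ∨ C.T C.m (-x + y) := by
  constructor
  · intro h
    by_cases hyx : C.le y x
    · exact Or.inl (C.hanti _ _ h hyx)
    · exact Or.inr (pos_iff_T.1 (lt_iff_diff.1 ⟨h, hyx⟩))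
  · rintro (rfl | h)
    · exact C.hrefl x
    · exact (lt_iff_diff.2 (pos_iff_T.2 h)).1

lemma m_ne_zero : C.m ≠ 0 := by
  intro h
  exact C.hm.2 (h ▸ C.hrefl (0:G))

lemma T0m : C.T 0 C.m := le_T C.hm.1

lemma comm_m (a : G) : AddCommute C.m a := by
  have h1 : Lt C.le 0 (a + C.m + -a) := by
    have := (@lt_tr_iff _ _ C a (-a) 0 C.m).2 C.hm
    simpa using this
  have h2 : Lt C.le 0 (-a + C.m + a) := by
    have := (@lt_tr_iff _ _ C (-a) a 0 C.m).2 C.hm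
    simpa using this
  have h3 : C.T C.m (a + C.m + -a) := pos_iff_T.1 h1
  have h4 : C.T C.m (-a + C.m + a) := pos_iff_T.1 h2
  have h5 : C.T (a + C.m + -a) C.m := by
    have := (@T_tr_iff _ _ C a (-a) C.m (-a + C.m + a)).2 h4
    have e : a + (-a + C.m + a) + -a = C.m := by simp [add_assoc]
    rwa [e] at this
  have h6 : a + C.m + -a = C.m := T_anti h5 h3
  have : a + C.m = C.m + a := by
    have := congrArg (· + a) h6
    simpa [add_assoc] using this
  exact this.symm

lemma comm_zsmul_m (a : G) (k : ℤ) : k • C.m + a = a + k • C.m :=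
  ((comm_m (C:=C) a).zsmul_left k).eq

-- nsmul positivity
lemma T0_nsmul (n : ℕ) : C.T 0 (n • C.m) := by
  induction n with
  | zero => simpa using T_refl (C:=C) 0
  | succ n ih =>
    have h1 : C.T (0 + 0) (n • C.m + C.m) := T_trans (T_addr 0 ih) (T_addl (n • C.m) T0m)
    simpa [succ_nsmul] using h1

lemma T0_zsmul {k : ℤ} (hk : 0 ≤ k) : C.T 0 (k • C.m) := by
  obtain ⟨n, rfl⟩ := Int.eq_ofNat_of_zero_le hk
  rw [natCast_zsmul]
  exact T0_nsmul n

lemma zsmul_mono {k l : ℤ} (h : k ≤ l) : C.T (k • C.m) (l • C.m) := by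
  have h1 : C.T 0 ((l - k) • C.m) := T0_zsmul (by omega)
  have h2 := T_addl (k • C.m) h1
  have e : k • C.m + (l - k) • C.m = l • C.m := by
    rw [← add_zsmul]; ring_nf
  rwa [add_zero, e] at h2

lemma zsmul_le_of_T {k l : ℤ} (h : C.T (k • C.m) (l • C.m)) : k ≤ l := by
  by_contra hkl
  have h1 : C.T ((l+1) • C.m) (k • C.m) := zsmul_mono (by omega)
  have h2 : C.T ((l+1) • C.m) (l • C.m) := T_trans h1 h
  have h3 : C.T (l • C.m + C.m) (l • C.m + 0) := by
    have e : (l+1) • C.m = l • C.m + C.m := by rw [add_zsmul, one_zsmul]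
    rw [← e]; simpa using h2
  have h4 : C.T C.m 0 := T_cancel_l h3
  exact m_ne_zero (C:=C) (T_anti h4 T0m)

/-- membership in the convex subgroup generated by `m` -/
def H (h : G) : Prop := ∃ n : ℕ, C.T (-(n • C.m)) h ∧ C.T h (n • C.m)

variable (C)

lemma H_zero : C.H 0 := ⟨0, by simpa using T_refl (C:=C) 0⟩

variable {C}

lemma H_neg {h : G} (hh : C.H h) : C.H (-h) := by
  obtain ⟨n, h1, h2⟩ := hh
  exact ⟨n, by simpa using T_neg h2, by simpa using T_neg h1⟩

lemma H_add {h1 h2 : G} (H1 : C.H h1) (H2 : C.H h2) : C.H (h1 + h2) := by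
  obtain ⟨n1, a1, b1⟩ := H1
  obtain ⟨n2, a2, b2⟩ := H2
  refine ⟨n1 + n2, ?_, ?_⟩
  · have := T_trans (T_addl (-(n1 • C.m)) a2) (T_addr h2 a1)
    have e : -((n1+n2) • C.m) = -(n1 • C.m) + -(n2 • C.m) := by
      rw [add_nsmul, neg_add_rev]
      exact ((((AddCommute.refl C.m).nsmul_nsmul n1 n2).neg_left).neg_right).eq.symm
    rwa [← e] at this
  · have := T_trans (T_addr h2 b1) (T_addl (n1 • C.m) b2)
    rwa [← add_nsmul] at this

lemma H_convex {v h : G} (h0 : C.T 0 v) (hvh : C.T v h) (hh : C.H h) : C.H v := by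
  obtain ⟨n, a, b⟩ := hh
  refine ⟨n, ?_, T_trans hvh b⟩
  have : C.T (-(n • C.m)) 0 := by simpa using T_neg (T0_nsmul n)
  exact T_trans this h0

/-- same coset of the convex subgroup -/
def E (x y : G) : Prop := C.H (-x + y)

variable (C)

lemma E_refl (x : G) : C.E x x := by simpa [E] using H_zero C

variable {C}

lemma E_symm {x y : G} (h : C.E x y) : C.E y x := by
  have := H_neg h
  simpa [E, neg_add_rev] using this

lemma E_trans {x y z : G} (h1 : C.E x y) (h2 : C.E y z) : C.E x z := by
  have := H_add h1 h2
  simpa [E, add_assoc] using this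

lemma T_of_E_not_le {x x' y : G} (hE : C.E x x') (hnE : ¬ C.E x y) (hT : C.T x y) :
    C.T x' y := by
  rcases T_total (C:=C) x' y with h | h
  · exact h
  · exfalso
    apply hnE
    have h0 : C.T 0 (-x + y) := by
      have := T_addl (-x) hT; simpa using this
    have h1 : C.T (-x + y) (-x + x') := T_addl (-x) h
    exact H_convex h0 h1 hE

lemma T_of_E_not_le' {x y y' : G} (hE : C.E y y') (hnE : ¬ C.E x y) (hT : C.T x y) :
    C.T x y' := by
  rcases T_total (C:=C) x y' with h | h
  · exact h
  · exfalso
    apply hnE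
    have h0 : C.T 0 (-x + y) := by
      have := T_addl (-x) hT; simpa using this
    have h1 : C.T (-x + y) (-y' + y) := by
      have := T_addr y (T_neg h); simpa using this
    exact H_convex h0 h1 (E_symm hE)

def ESetoid : Setoid G := ⟨C.E, ⟨E_refl C, E_symm, E_trans⟩⟩

noncomputable def rep (x : G) : G := (Quotient.mk C.ESetoid x).out

variable (C)

lemma rep_spec (x : G) : C.E (C.rep x) x :=
  Quotient.exact (Quotient.out_eq (Quotient.mk C.ESetoid x))

variable {C}

lemma rep_congr {x y : G} (h : C.E x y) : C.rep x = C.rep y := by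
  unfold rep
  rw [Quotient.sound (s := C.ESetoid) h]

noncomputable def dd (x : G) : G := -(C.rep x) + x

variable (C)

lemma dd_mem (x : G) : C.H (C.dd x) := rep_spec C x

lemma k_exists (x : G) :
    ∃ k : ℤ, C.T (k • C.m) (C.dd x) ∧ ∀ l : ℤ, C.T (l • C.m) (C.dd x) → l ≤ k := by
  obtain ⟨n, a, b⟩ := dd_mem C x
  refine Int.exists_greatest_of_bdd ⟨(n : ℤ), fun l hl => ?_⟩ ⟨-(n:ℤ), ?_⟩
  · have : C.T (l • C.m) ((n:ℤ) • C.m) := by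
      rw [natCast_zsmul]; exact T_trans hl b
    exact zsmul_le_of_T this
  · rw [neg_zsmul, natCast_zsmul]
    exact a

noncomputable def kk (x : G) : ℤ := (k_exists C x).choose

lemma kk_le (x : G) : C.T (C.kk x • C.m) (C.dd x) := (k_exists C x).choose_spec.1

lemma kk_max (x : G) : ∀ l : ℤ, C.T (l • C.m) (C.dd x) → l ≤ C.kk x :=
  (k_exists C x).choose_spec.2

noncomputable def rr (x : G) : G := -(C.kk x • C.m) + C.dd x

lemma rr_nonneg (x : G) : C.T 0 (C.rr x) := by
  have := T_addl (-(C.kk x • C.m)) (kk_le C x)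
  simpa [rr] using this

lemma rr_lt_m (x : G) : C.T (C.rr x) C.m ∧ C.rr x ≠ C.m := by
  have hnot : ¬ C.T C.m (C.rr x) := by
    intro h
    have h1 : C.T (C.kk x • C.m + C.m) (C.kk x • C.m + C.rr x) := T_addl _ h
    have e : C.kk x • C.m + C.rr x = C.dd x := by
      unfold rr; rw [← add_assoc]; simp
    have e2 : C.kk x • C.m + C.m = (C.kk x + 1) • C.m := by
      rw [add_zsmul, one_zsmul]
    rw [e, e2] at h1
    have := kk_max C x _ h1
    omega
  refine ⟨not_T hnot, fun he => hnot (he ▸ T_refl _)⟩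

lemma recon (x : G) : x = C.rep x + (C.kk x • C.m + C.rr x) := by
  unfold rr dd
  simp

variable {C}

lemma move_m (a : G) (k : ℤ) : a + k • C.m = k • C.m + a := (comm_zsmul_m a k).symm

lemma recon_d (x : G) : x = C.rep x + C.dd x := by unfold dd; simp

lemma dd_eq (x : G) : C.dd x = C.kk x • C.m + C.rr x := by unfold rr; simp

lemma coords_inj {x y : G} (hE : C.E x y) (hk : C.kk x = C.kk y) (hr : C.rr x = C.rr y) :
    x = y := by
  have h1 := recon C x
  rw [rep_congr hE, hk, hr, ← recon C y] at h1
  exact h1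

lemma diff_eq {x y : G} (hE : C.E x y) :
    -x + y = (C.kk y - C.kk x) • C.m + (-(C.rr x) + C.rr y) := by
  have ha : C.rep x = C.rep y := rep_congr hE
  have e1 : -x + y = -(C.rr x) + ((-(C.kk x)) • C.m + (C.kk y • C.m + C.rr y)) := by
    conv_lhs => rw [recon C x, recon C y]
    rw [ha, neg_zsmul]
    simp [add_assoc]
  rw [e1, show (-(C.kk x)) • C.m + (C.kk y • C.m + C.rr y)
        = (-(C.kk x) + C.kk y) • C.m + C.rr y from by rw [add_zsmul, add_assoc],
     ← add_assoc, ← move_m, add_assoc,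
     show -(C.kk x) + C.kk y = C.kk y - C.kk x from by omega]
  rw [← move_m, ← add_assoc]

lemma e_lb (x y : G) : C.T (-(C.m)) (-(C.rr x) + C.rr y) := by
  have h1 : C.T (-(C.m)) (-(C.rr x)) := T_neg (rr_lt_m C x).1
  have h2 : C.T (-(C.rr x) + 0) (-(C.rr x) + C.rr y) := T_addl _ (rr_nonneg C y)
  rw [add_zero] at h2
  exact T_trans h1 h2

lemma e_ub (x y : G) : C.T (-(C.rr x) + C.rr y) C.m := by
  have h1 : C.T (-(C.rr x) + C.rr y) (0 + C.rr y) := T_addr _ (by simpa using T_neg (rr_nonneg C x))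
  rw [zero_add] at h1
  exact T_trans h1 (rr_lt_m C y).1

lemma big_pos {d : ℤ} (hd : 2 ≤ d) {e : G} (he : C.T (-(C.m)) e) :
    C.T C.m (d • C.m + e) := by
  have h1 : C.T C.m ((d-1) • C.m) := by
    have := zsmul_mono (C:=C) (k:=1) (l:=d-1) (by omega)
    simpa using this
  have h2 : C.T (d • C.m + -(C.m)) (d • C.m + e) := T_addl _ he
  have e3 : d • C.m + -(C.m) = (d-1) • C.m := by
    rw [show d - 1 = d + -1 from by omega, add_zsmul, neg_zsmul, one_zsmul]
  rw [e3] at h2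
  exact T_trans h1 h2

lemma lt_coords {x y : G} (hE : C.E x y) (h : Lt C.le x y) :
    C.kk x + 1 ≤ C.kk y ∧ (C.kk y = C.kk x + 1 → C.T (C.rr x) (C.rr y)) := by
  have hm : C.T C.m (-x + y) := pos_iff_T.1 (lt_iff_diff.1 h)
  rw [diff_eq hE] at hm
  set d := C.kk y - C.kk x with hd
  set e := -(C.rr x) + C.rr y with he
  have hd1 : 1 ≤ d := by
    by_contra hcon
    have h0 : C.T (d • C.m) ((0:ℤ) • C.m) := zsmul_mono (by omega)
    rw [zero_zsmul] at h0
    have h1 : C.T (d • C.m + e) (0 + e) := T_addr _ h0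
    rw [zero_add] at h1
    have h2 : C.T C.m e := T_trans hm h1
    have h3 : e = C.m := T_anti (e_ub x y) h2
    have h4 : C.T e (C.rr y) := by
      have := T_addr (C.rr y) (T_neg (rr_nonneg C x))
      simpa [he] using this
    have h5 : C.T C.m (C.rr y) := h3 ▸ h4
    exact (rr_lt_m C y).2 (T_anti (rr_lt_m C y).1 h5)
  refine ⟨by omega, fun hky => ?_⟩
  have hd1' : d = 1 := by omega
  rw [hd1', one_zsmul] at hm
  have h0 : C.T (C.m + 0) (C.m + e) := by simpa using hm
  have h1 : C.T 0 e := T_cancel_l h0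
  have h2 : C.T (C.rr x + 0) (C.rr x + e) := T_addl _ h1
  have e2 : C.rr x + e = C.rr y := by rw [he, ← add_assoc]; simp
  rwa [add_zero, e2] at h2

lemma not_Tm_small {e : G} (h : ¬ C.T C.m ((1:ℤ) • C.m + e)) : C.T e 0 ∧ e ≠ 0 := by
  have he0 : ¬ C.T 0 e := by
    intro h0
    apply h
    have h1 := T_addl C.m h0
    rw [add_zero] at h1
    rw [one_zsmul]
    exact h1
  exact ⟨not_T he0, fun hrfl => he0 (hrfl ▸ T_refl (C:=C) (0:G))⟩

lemma diffr_T {u v : G} (h : C.T (-u + v) 0) : C.T v u := by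
  have h1 := T_addl u h
  rw [add_zero, ← add_assoc] at h1
  simpa using h1

lemma incomp_coords {x y : G} (hE : C.E x y) (hxy : x ≠ y)
    (h1 : ¬ C.le x y) (h2 : ¬ C.le y x) :
    (C.kk y = C.kk x ∧ C.rr x ≠ C.rr y) ∨
    (C.kk y = C.kk x + 1 ∧ C.T (C.rr y) (C.rr x) ∧ C.rr y ≠ C.rr x) ∨
    (C.kk x = C.kk y + 1 ∧ C.T (C.rr x) (C.rr y) ∧ C.rr x ≠ C.rr y) := by
  have hnm1 : ¬ C.T C.m (-x + y) := by
    intro hT; exact h1 (le_iff_diff.2 (Or.inr hT))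
  have hnm2 : ¬ C.T C.m (-y + x) := by
    intro hT; exact h2 (le_iff_diff.2 (Or.inr hT))
  rw [diff_eq hE] at hnm1
  rw [diff_eq (E_symm hE)] at hnm2
  have hd1 : C.kk y - C.kk x ≤ 1 := by
    by_contra hcon
    exact hnm1 (big_pos (by omega) (e_lb x y))
  have hd2 : C.kk x - C.kk y ≤ 1 := by
    by_contra hcon
    exact hnm2 (big_pos (by omega) (e_lb y x))
  have hd3 : C.kk y - C.kk x = -1 ∨ C.kk y - C.kk x = 0 ∨ C.kk y - C.kk x = 1 := by omega
  rcases hd3 with h | h | h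
  · right; right
    rw [show C.kk x - C.kk y = (1:ℤ) from by omega] at hnm2
    obtain ⟨hT, hne⟩ := not_Tm_small hnm2
    exact ⟨by omega, diffr_T hT, fun hq => hne (by rw [hq]; simp)⟩
  · left
    exact ⟨by omega, fun hr => hxy (coords_inj hE (by omega) hr)⟩
  · right; left
    rw [show C.kk y - C.kk x = (1:ℤ) from by omega] at hnm1
    obtain ⟨hT, hne⟩ := not_Tm_small hnm1
    exact ⟨by omega, diffr_T hT, fun hq => hne (by rw [hq]; simp)⟩

attribute [irreducible] rep dd kk rr

/-! ### Strict trace order helpers -/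

lemma LtT_not_sym {a b : G} (h1 : Lt C.T a b) (h2 : Lt C.T b a) : False := h1.2 h2.1

lemma LtT_trans {a b c : G} (h1 : Lt C.T a b) (h2 : Lt C.T b c) : Lt C.T a c :=
  ⟨T_trans h1.1 h2.1, fun hca => h1.2 (T_trans h2.1 hca) ⟩

lemma LtT_trichotomy (a b : G) : Lt C.T a b ∨ a = b ∨ Lt C.T b a := by
  rcases T_total (C:=C) a b with h | h
  · by_cases h2 : C.T b a
    · exact Or.inr (Or.inl (T_anti h h2))
    · exact Or.inl ⟨h, h2⟩
  · by_cases h2 : C.T a b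
    · exact Or.inr (Or.inl (T_anti h2 h))
    · exact Or.inr (Or.inr ⟨h, h2⟩)

/-! ### The three within-class linear orders -/

variable (C)

noncomputable def j2 (x : G) : ℤ := C.kk x / 2
noncomputable def j3 (x : G) : ℤ := (C.kk x + 1) / 2

attribute [irreducible] j2 j3

def Wlex (f : G → ℤ) (x y : G) : Prop :=
  f x < f y ∨ (f x = f y ∧ (Lt C.T (C.rr x) (C.rr y) ∨ (C.rr x = C.rr y ∧ C.kk x ≤ C.kk y)))

def WC (x y : G) : Prop :=
  C.kk x < C.kk y ∨ (C.kk x = C.kk y ∧ C.T (C.rr y) (C.rr x))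

variable {C}

lemma Wlex_refl (f : G → ℤ) (x : G) : C.Wlex f x x :=
  Or.inr ⟨rfl, Or.inr ⟨rfl, le_refl _⟩⟩

lemma Wlex_trans {f : G → ℤ} {x y z : G} (h1 : C.Wlex f x y) (h2 : C.Wlex f y z) :
    C.Wlex f x z := by
  rcases h1 with h1 | ⟨hf1, h1⟩
  · rcases h2 with h2 | ⟨hf2, _⟩
    · exact Or.inl (by omega)
    · exact Or.inl (by omega)
  · rcases h2 with h2 | ⟨hf2, h2⟩
    · exact Or.inl (by omega)
    · refine Or.inr ⟨by omega, ?_⟩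
      rcases h1 with h1 | ⟨hr1, hk1⟩
      · rcases h2 with h2 | ⟨hr2, _⟩
        · exact Or.inl (LtT_trans h1 h2)
        · exact Or.inl (hr2 ▸ h1)
      · rcases h2 with h2 | ⟨hr2, hk2⟩
        · exact Or.inl (hr1 ▸ h2)
        · exact Or.inr ⟨hr1.trans hr2, le_trans hk1 hk2⟩

lemma Wlex_total (f : G → ℤ) (x y : G) : C.Wlex f x y ∨ C.Wlex f y x := by
  rcases lt_trichotomy (f x) (f y) with h | h | h
  · exact Or.inl (Or.inl h)
  · rcases LtT_trichotomy (C:=C) (C.rr x) (C.rr y) with hr | hr | hr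
    · exact Or.inl (Or.inr ⟨h, Or.inl hr⟩)
    · rcases le_total (C.kk x) (C.kk y) with hk | hk
      · exact Or.inl (Or.inr ⟨h, Or.inr ⟨hr, hk⟩⟩)
      · exact Or.inr (Or.inr ⟨h.symm, Or.inr ⟨hr.symm, hk⟩⟩)
    · exact Or.inr (Or.inr ⟨h.symm, Or.inl hr⟩)
  · exact Or.inr (Or.inl h)

lemma Wlex_anti {f : G → ℤ} {x y : G}
    (hE : C.E x y) (h1 : C.Wlex f x y) (h2 : C.Wlex f y x) : x = y := by
  rcases h1 with h1 | ⟨hf1, h1⟩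
  · rcases h2 with h2 | ⟨hf2, _⟩ <;> omega
  · rcases h2 with h2 | ⟨hf2, h2⟩
    · omega
    · rcases h1 with h1 | ⟨hr1, hk1⟩
      · rcases h2 with h2 | ⟨hr2, _⟩
        · exact absurd (T_anti h1.1 h2.1) (fun he => h1.2 (he ▸ T_refl _))
        · exact absurd hr2 (fun he => h1.2 (he ▸ T_refl _))
      · rcases h2 with h2 | ⟨hr2, hk2⟩
        · exact absurd hr1.symm (fun he => h2.2 (he ▸ T_refl _))
        · exact coords_inj hE (by omega) hr1

lemma WC_refl (x : G) : C.WC x x := Or.inr ⟨rfl, T_refl _⟩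

lemma WC_trans {x y z : G} (h1 : C.WC x y) (h2 : C.WC y z) : C.WC x z := by
  rcases h1 with h1 | ⟨hk1, h1⟩
  · rcases h2 with h2 | ⟨hk2, _⟩
    · exact Or.inl (by omega)
    · exact Or.inl (by omega)
  · rcases h2 with h2 | ⟨hk2, h2⟩
    · exact Or.inl (by omega)
    · exact Or.inr ⟨by omega, T_trans h2 h1⟩

lemma WC_total (x y : G) : C.WC x y ∨ C.WC y x := by
  rcases lt_trichotomy (C.kk x) (C.kk y) with h | h | h
  · exact Or.inl (Or.inl h)
  · rcases T_total (C:=C) (C.rr x) (C.rr y) with hr | hr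
    · exact Or.inr (Or.inr ⟨h.symm, hr⟩)
    · exact Or.inl (Or.inr ⟨h, hr⟩)
  · exact Or.inr (Or.inl h)

lemma WC_anti {x y : G} (hE : C.E x y) (h1 : C.WC x y) (h2 : C.WC y x) : x = y := by
  rcases h1 with h1 | ⟨hk1, h1⟩
  · rcases h2 with h2 | ⟨hk2, _⟩ <;> omega
  · rcases h2 with h2 | ⟨hk2, h2⟩
    · omega
    · exact coords_inj hE (by omega) (T_anti h2 h1)

/-! ### extension lemmas within a class -/

lemma WA_ext {x y : G} (hE : C.E x y) (h : Lt C.le x y) : C.Wlex (C.j2) x y := by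
  obtain ⟨hk, hr⟩ := lt_coords hE h
  by_cases hj : C.j2 x < C.j2 y
  · exact Or.inl hj
  · have hj2 : C.j2 x = C.j2 y := by unfold j2 at *; omega
    have hky : C.kk y = C.kk x + 1 := by unfold j2 at hj2; omega
    have hT := hr hky
    refine Or.inr ⟨hj2, ?_⟩
    by_cases hre : C.rr x = C.rr y
    · exact Or.inr ⟨hre, by omega⟩
    · exact Or.inl ⟨hT, fun h2 => hre (T_anti hT h2)⟩

lemma WB_ext {x y : G} (hE : C.E x y) (h : Lt C.le x y) : C.Wlex (C.j3) x y := by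
  obtain ⟨hk, hr⟩ := lt_coords hE h
  by_cases hj : C.j3 x < C.j3 y
  · exact Or.inl hj
  · have hj2 : C.j3 x = C.j3 y := by unfold j3 at *; omega
    have hky : C.kk y = C.kk x + 1 := by unfold j3 at hj2; omega
    have hT := hr hky
    refine Or.inr ⟨hj2, ?_⟩
    by_cases hre : C.rr x = C.rr y
    · exact Or.inr ⟨hre, by omega⟩
    · exact Or.inl ⟨hT, fun h2 => hre (T_anti hT h2)⟩

lemma WC_ext {x y : G} (hE : C.E x y) (h : Lt C.le x y) : C.WC x y :=
  Or.inl (by have := (lt_coords hE h).1; omega)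

/-! ### the global orders -/

variable (C)

def Psi (W : G → G → Prop) (x y : G) : Prop :=
  (¬ C.E x y ∧ C.T x y) ∨ (C.E x y ∧ W x y)

variable {C}

lemma Psi_refl (W : G → G → Prop) (hrefl : ∀ x, W x x) (x : G) : C.Psi W x x :=
  Or.inr ⟨E_refl C x, hrefl x⟩

lemma Psi_trans {W : G → G → Prop}
    (htrans : ∀ x y z : G, W x y → W y z → W x z) {x y z : G}
    (h1 : C.Psi W x y) (h2 : C.Psi W y z) : C.Psi W x z := by
  rcases h1 with ⟨hnE1, hT1⟩ | ⟨hE1, hW1⟩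
  · rcases h2 with ⟨hnE2, hT2⟩ | ⟨hE2, hW2⟩
    · refine Or.inl ⟨?_, T_trans hT1 hT2⟩
      intro hExz
      apply hnE1
      have h0 : C.T 0 (-x + y) := by simpa using T_addl (-x) hT1
      have h1' : C.T (-x + y) (-x + z) := T_addl (-x) hT2
      exact H_convex h0 h1' hExz
    · refine Or.inl ⟨?_, T_of_E_not_le' hE2 hnE1 hT1⟩
      intro hExz
      exact hnE1 (E_trans hExz (E_symm hE2))
  · rcases h2 with ⟨hnE2, hT2⟩ | ⟨hE2, hW2⟩
    · refine Or.inl ⟨?_, T_of_E_not_le (E_symm hE1) hnE2 hT2⟩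
      intro hExz
      exact hnE2 (E_trans (E_symm hE1) hExz)
    · exact Or.inr ⟨E_trans hE1 hE2, htrans _ _ _ hW1 hW2⟩

lemma Psi_anti {W : G → G → Prop}
    (hanti : ∀ x y : G, C.E x y → W x y → W y x → x = y) {x y : G}
    (h1 : C.Psi W x y) (h2 : C.Psi W y x) : x = y := by
  rcases h1 with ⟨hnE1, hT1⟩ | ⟨hE1, hW1⟩
  · rcases h2 with ⟨hnE2, hT2⟩ | ⟨hE2, hW2⟩
    · exact T_anti hT1 hT2
    · exact absurd (E_symm hE2) hnE1
  · rcases h2 with ⟨hnE2, hT2⟩ | ⟨hE2, hW2⟩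
    · exact absurd (E_symm hE1) hnE2
    · exact hanti _ _ hE1 hW1 hW2

lemma Psi_total {W : G → G → Prop}
    (htot : ∀ x y : G, W x y ∨ W y x) (x y : G) : C.Psi W x y ∨ C.Psi W y x := by
  by_cases hE : C.E x y
  · rcases htot x y with h | h
    · exact Or.inl (Or.inr ⟨hE, h⟩)
    · exact Or.inr (Or.inr ⟨E_symm hE, h⟩)
  · rcases T_total (C:=C) x y with h | h
    · exact Or.inl (Or.inl ⟨hE, h⟩)
    · exact Or.inr (Or.inl ⟨fun h2 => hE (E_symm h2), h⟩)

lemma Psi_ext {W : G → G → Prop}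
    (hrefl : ∀ x, W x x)
    (hext : ∀ x y : G, C.E x y → Lt C.le x y → W x y) {x y : G}
    (h : C.le x y) : C.Psi W x y := by
  by_cases hyx : C.le y x
  · have : x = y := C.hanti _ _ h hyx
    exact this ▸ Psi_refl W hrefl x
  · by_cases hE : C.E x y
    · exact Or.inr ⟨hE, hext x y hE ⟨h, hyx⟩⟩
    · exact Or.inl ⟨hE, le_T h⟩

/-- cross-class comparability -/
lemma le_of_not_E_T {x y : G} (hnE : ¬ C.E x y) (hT : C.T x y) : C.le x y := by
  have h0 : C.T 0 (-x + y) := by simpa using T_addl (-x) hT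
  rcases T_total (C:=C) (-x + y) C.m with h | h
  · exfalso
    apply hnE
    refine ⟨1, ?_, ?_⟩
    · have h1 : C.T (-((1:ℕ) • C.m)) 0 := by simpa using T_neg (T0_nsmul (C:=C) 1)
      exact T_trans h1 h0
    · simpa using h
  · exact le_iff_diff.2 (Or.inr h)

/-! ### main realizer theorem -/

def IsPartialOrderRel' (le : G → G → Prop) : Prop :=
  (∀ x, le x x) ∧ (∀ x y z, le x y → le y z → le x z) ∧ ∀ x y, le x y → le y x → x = y

set_option maxHeartbeats 2000000 in
theorem realizer (C : Ctx G) :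
    ∃ t1 t2 t3 : G → G → Prop,
      (IsPartialOrderRel' t1 ∧ (∀ x y, t1 x y ∨ t1 y x) ∧ ∀ x y : G, C.le x y → t1 x y) ∧
      (IsPartialOrderRel' t2 ∧ (∀ x y, t2 x y ∨ t2 y x) ∧ ∀ x y : G, C.le x y → t2 x y) ∧
      (IsPartialOrderRel' t3 ∧ (∀ x y, t3 x y ∨ t3 y x) ∧ ∀ x y : G, C.le x y → t3 x y) ∧
      ∀ x y : G, C.le x y ↔ (t1 x y ∧ t2 x y ∧ t3 x y) := by
  classical
  refine ⟨C.Psi (C.Wlex C.j2), C.Psi (C.Wlex C.j3), C.Psi C.WC, ?_, ?_, ?_, ?_⟩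
  · exact ⟨⟨Psi_refl _ (Wlex_refl _), fun x y z => Psi_trans (fun _ _ _ => Wlex_trans),
      fun x y => Psi_anti (fun _ _ h => Wlex_anti h)⟩,
      Psi_total (Wlex_total _), fun x y => Psi_ext (Wlex_refl _) (fun _ _ => WA_ext)⟩
  · exact ⟨⟨Psi_refl _ (Wlex_refl _), fun x y z => Psi_trans (fun _ _ _ => Wlex_trans),
      fun x y => Psi_anti (fun _ _ h => Wlex_anti h)⟩,
      Psi_total (Wlex_total _), fun x y => Psi_ext (Wlex_refl _) (fun _ _ => WB_ext)⟩
  · exact ⟨⟨Psi_refl _ WC_refl, fun x y z => Psi_trans (fun _ _ _ => WC_trans),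
      fun x y => Psi_anti (fun _ _ h => WC_anti h)⟩,
      Psi_total WC_total, fun x y => Psi_ext WC_refl (fun _ _ => WC_ext)⟩
  · intro x y
    constructor
    · intro h
      exact ⟨Psi_ext (Wlex_refl _) (fun _ _ => WA_ext) h,
        Psi_ext (Wlex_refl _) (fun _ _ => WB_ext) h,
        Psi_ext WC_refl (fun _ _ => WC_ext) h⟩
    · rintro ⟨hA, hB, hC⟩
      by_cases hxy : x = y
      · exact hxy ▸ C.hrefl x
      by_cases hE : C.E x y
      · -- extract the inner orders
        have hWA : C.Wlex C.j2 x y := by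
          rcases hA with ⟨hnE, _⟩ | ⟨_, h⟩
          · exact absurd hE hnE
          · exact h
        have hWB : C.Wlex C.j3 x y := by
          rcases hB with ⟨hnE, _⟩ | ⟨_, h⟩
          · exact absurd hE hnE
          · exact h
        have hWC : C.WC x y := by
          rcases hC with ⟨hnE, _⟩ | ⟨_, h⟩
          · exact absurd hE hnE
          · exact h
        by_cases hlxy : C.le x y
        · exact hlxy
        exfalso
        by_cases hlyx : C.le y x
        · -- then all orders put y first, contradiction with antisymmetry
          have hWA' : C.Wlex C.j2 y x := WA_ext (E_symm hE) ⟨hlyx, hlxy⟩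
          exact hxy (Wlex_anti hE hWA hWA')
        · rcases incomp_coords hE hxy hlxy hlyx with ⟨hk, hne⟩ | ⟨hk, hT, hne⟩ | ⟨hk, hT, hne⟩
          · -- same k, different r : tC gives T (rr y) (rr x), tA gives the opposite
            have hTC : C.T (C.rr y) (C.rr x) := by
              rcases hWC with h | ⟨_, h⟩
              · omega
              · exact h
            rcases hWA with h | ⟨_, hin⟩
            · unfold j2 at h; omega
            · rcases hin with h | ⟨h, _⟩
              · exact hne (T_anti h.1 hTC)
              · exact hne h
          · -- kk y = kk x + 1, rr y < rr x
            have hpar : C.kk x % 2 = 0 ∨ C.kk x % 2 = 1 := by omega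
            rcases hpar with hpar | hpar
            · -- even : use tA
              rcases hWA with h | ⟨_, hin⟩
              · unfold j2 at h; omega
              · rcases hin with h | ⟨h, _⟩
                · exact hne (T_anti hT h.1)
                · exact hne h.symm
            · -- odd : use tB
              rcases hWB with h | ⟨_, hin⟩
              · unfold j3 at h; omega
              · rcases hin with h | ⟨h, _⟩
                · exact hne (T_anti hT h.1)
                · exact hne h.symm
          · -- kk x = kk y + 1 : tC impossible
            rcases hWC with h | ⟨h, _⟩ <;> omega
      · -- different classes
        have hT : C.T x y := by
          rcases hA with ⟨_, h⟩ | ⟨hE', _⟩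
          · exact h
          · exact absurd hE' hE
        exact le_of_not_E_T hE hT

end Ctx

/-- A threshold group with attained threshold has order dimension at
most 3: there are three total orders extending the order whose intersection is the order. -/
theorem thresholdGroup_dimension_le_three {G : Type*} [AddGroup G] (le : G → G → Prop)
    (hpo : IsPartialOrderRel le) (hc : IsCompat le) (hth : IsThresholdOrder le)
    (hatt : ∃ m : G, Lt le 0 m ∧ ∀ x : G, Lt le 0 x → PredLe le m x) :
    ∃ t1 t2 t3 : G → G → Prop,
      (IsPartialOrderRel t1 ∧ IsTotalRel t1 ∧ ∀ x y : G, le x y → t1 x y) ∧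
      (IsPartialOrderRel t2 ∧ IsTotalRel t2 ∧ ∀ x y : G, le x y → t2 x y) ∧
      (IsPartialOrderRel t3 ∧ IsTotalRel t3 ∧ ∀ x y : G, le x y → t3 x y) ∧
      ∀ x y : G, le x y ↔ (t1 x y ∧ t2 x y ∧ t3 x y) := by
  obtain ⟨m, hm, hmin⟩ := hatt
  let C : Ctx G := ⟨le, hpo.1, hpo.2.1, hpo.2.2, hc, hth.2.1, hth.2.2, m, hm, hmin⟩
  obtain ⟨t1, t2, t3, h1, h2, h3, h4⟩ := Ctx.realizer C
  exact ⟨t1, t2, t3, ⟨⟨h1.1.1, h1.1.2.1, h1.1.2.2⟩, h1.2.1, h1.2.2⟩,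
    ⟨⟨h2.1.1, h2.1.2.1, h2.1.2.2⟩, h2.2.1, h2.2.2⟩,
    ⟨⟨h3.1.1, h3.1.2.1, h3.1.2.2⟩, h3.2.1, h3.2.2⟩, h4⟩

end ThrPaper
end
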